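/- Let B ~ Binomial(S, L/M) with L < M, and define F(S) = ∑_{s=0}^S P(B=s)·log₂(1 + (s·M²/L·β_r + β_d)·ρ) for positive constants β_r, β_d, ρ. Then F(S) is monotonically increasing in S. -/

import Mathlib

open Real Finset

lemma binom_step (p : ℝ) (f : ℕ → ℝ) (S : ℕ) :
    ∑ s ∈ Finset.range (S+2), ((S+1).choose s : ℝ) * p^s * (1-p)^(S+1-s) * f s
    = (1-p) * ∑ s ∈ Finset.range (S+1), (S.choose s : ℝ) * p^s * (1-p)^(S-s) * f s
    + p * ∑ s ∈ Finset.range (S+1), (S.choose s : ℝ) * p^s * (1-p)^(S-s) * f (s+1) := by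
  rw [Finset.sum_range_succ' (fun s => ((S+1).choose s : ℝ) * p^s * (1-p)^(S+1-s) * f s) (S+1)]
  have e1 : ∀ s ∈ Finset.range (S+1),
      ((S+1).choose (s+1) : ℝ) * p^(s+1) * (1-p)^(S+1-(s+1)) * f (s+1)
      = (S.choose s : ℝ) * p^(s+1) * (1-p)^(S-s) * f (s+1)
        + (1-p) * ((S.choose (s+1) : ℝ) * p^(s+1) * (1-p)^(S-(s+1)) * f (s+1)) := by
    intro s hs
    rw [Finset.mem_range] at hs
    rw [Nat.choose_succ_succ]
    push_cast
    rcases Nat.lt_or_ge s S with h | h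
    · have h1 : S + 1 - (s+1) = S - s := by omega
      have h2 : S - s = (S - (s+1)) + 1 := by omega
      rw [h2, pow_succ]
      ring
    · have hsS : s = S := by omega
      subst hsS
      simp [Nat.choose_succ_self]
  rw [Finset.sum_congr rfl e1, Finset.sum_add_distrib]
  have eA : (1-p) * ∑ s ∈ Finset.range (S+1), (S.choose s : ℝ) * p^s * (1-p)^(S-s) * f s
      = ∑ s ∈ Finset.range (S+1), (1-p) * ((S.choose (s+1) : ℝ) * p^(s+1) * (1-p)^(S-(s+1)) * f (s+1))
        + ((S+1).choose 0 : ℝ) * p^0 * (1-p)^(S+1-0) * f 0 := by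
    rw [Finset.sum_range_succ' (fun s => (S.choose s : ℝ) * p^s * (1-p)^(S-s) * f s) S,
        Finset.sum_range_succ (fun s => (1-p) * ((S.choose (s+1) : ℝ) * p^(s+1) * (1-p)^(S-(s+1)) * f (s+1))) S]
    simp [Nat.choose_succ_self, mul_add, Finset.mul_sum]
    ring
  have eB : p * ∑ s ∈ Finset.range (S+1), (S.choose s : ℝ) * p^s * (1-p)^(S-s) * f (s+1)
      = ∑ s ∈ Finset.range (S+1), (S.choose s : ℝ) * p^(s+1) * (1-p)^(S-s) * f (s+1) := by
    rw [Finset.mul_sum]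
    refine Finset.sum_congr rfl fun s _ => ?_
    rw [pow_succ]
    ring
  rw [eA, eB]
  ring

/-- For `B ~ Binomial(S, L/M)` with `L < M`,
`F(S) = ∑_{s=0}^S P(B=s)·log₂(1 + (sM²/L·β_r + β_d)ρ)` is monotonically increasing in `S`. -/
theorem stmt6 (M L : ℕ) (hL : 0 < L) (hLM : L < M)
    (βr βd ρ : ℝ) (hβr : 0 < βr) (hβd : 0 < βd) (hρ : 0 < ρ) :
    Monotone (fun S : ℕ => ∑ s ∈ Finset.range (S + 1),
      (S.choose s : ℝ) * ((L : ℝ) / (M : ℝ)) ^ s * (1 - (L : ℝ) / (M : ℝ)) ^ (S - s) *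
        Real.logb 2 (1 + ((s : ℝ) * (M : ℝ) ^ 2 / (L : ℝ) * βr + βd) * ρ)) := by
  have hM : 0 < M := hL.trans hLM
  have hM0 : (0:ℝ) < M := by exact_mod_cast hM
  have hL0 : (0:ℝ) < L := by exact_mod_cast hL
  set p : ℝ := (L:ℝ)/(M:ℝ) with hpdef
  have hp0 : 0 ≤ p := by positivity
  have hp1 : p ≤ 1 := by
    rw [hpdef, div_le_one hM0]
    exact_mod_cast hLM.le
  have hq0 : 0 ≤ 1 - p := by linarith
  set f : ℕ → ℝ := fun s => Real.logb 2 (1 + ((s : ℝ) * (M : ℝ) ^ 2 / (L : ℝ) * βr + βd) * ρ) with hf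
  have hfmono : ∀ s : ℕ, f s ≤ f (s+1) := by
    intro s
    have h1 : (0:ℝ) < 1 + ((s : ℝ) * (M : ℝ) ^ 2 / (L : ℝ) * βr + βd) * ρ := by positivity
    have h2 : 1 + ((s : ℝ) * (M : ℝ) ^ 2 / (L : ℝ) * βr + βd) * ρ
        ≤ 1 + (((s:ℝ)+1) * (M : ℝ) ^ 2 / (L : ℝ) * βr + βd) * ρ := by
      gcongr <;> linarith
    simp only [hf]
    push_cast
    exact Real.logb_le_logb_of_le one_lt_two h1 h2
  apply monotone_nat_of_le_succ
  intro S
  have key := binom_step p f S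
  simp only [hf] at key
  push_cast at key ⊢
  rw [key]
  have hAB : ∑ s ∈ Finset.range (S+1), (S.choose s : ℝ) * p^s * (1-p)^(S-s) * f s
      ≤ ∑ s ∈ Finset.range (S+1), (S.choose s : ℝ) * p^s * (1-p)^(S-s) * f (s+1) := by
    refine Finset.sum_le_sum fun s _ => ?_
    have hc : (0:ℝ) ≤ (S.choose s : ℝ) * p^s * (1-p)^(S-s) := by positivity
    exact mul_le_mul_of_nonneg_left (hfmono s) hc
  simp only [hf] at hAB
  push_cast at hAB
  nlinarith [mul_le_mul_of_nonneg_left hAB hp0]
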